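/- Let (e_n) be a sequence in a Banach space X with continuous biorthogonal functionals e_n^♯ defining the smallest compatible filter 𝓐 = { a ⊆ ℕ : ⋂_{i=1}^m θ(x_i, Ex_i, ε) ⊆ a for some x_1,…,x_m ∈ X and ε > 0 }. Then 𝓐 is an analytic subset of ℘(ℕ) = {0,1}^ℕ. -/

import Mathlib

open Filter MeasureTheory

variable {X : Type*} [NormedAddCommGroup X] [NormedSpace ℝ X]

/-- `θ(x, a, ε) = { m : ‖x − ∑_{n<m} a n • e n‖ < ε }`. -/
def thetaSet (e : ℕ → X) (x : X) (a : ℕ → ℝ) (ε : ℝ) : Set ℕ :=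
  {m : ℕ | ‖x - ∑ n ∈ Finset.range m, a n • e n‖ < ε}

/-- The characteristic function identifying `℘(ℕ)` with the Cantor space `ℕ → Bool`. -/
noncomputable def chi (s : Set ℕ) : ℕ → Bool := fun n =>
  @decide (n ∈ s) (Classical.propDecidable _)

/-- For a sequence `(e n)` in a separable Banach space `X` with continuous
biorthogonal functionals `(f n)`, the smallest compatible filter
`𝓐 = { a : ⋂_{i} θ(x i, E (x i), ε) ⊆ a for some finitely many x i and ε > 0 }` is an
analytic subset of the Cantor space `℘(ℕ) = {0,1}^ℕ`. -/
theorem smallest_compatible_filter_analytic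
    [CompleteSpace X] [SecondCountableTopology X]
    (e : ℕ → X) (f : ℕ → X →L[ℝ] ℝ)
    (hbi : ∀ k n, f k (e n) = if k = n then 1 else 0)
    (A : Set (ℕ → Bool))
    (hA : A = chi '' {a : Set ℕ | ∃ (m : ℕ) (x : Fin (m + 1) → X) (ε : ℝ), 0 < ε ∧
      (⋂ i, thetaSet e (x i) (fun n => f n (x i)) ε) ⊆ a}) :
    AnalyticSet A := by
  have key : A = ⋃ (m : ℕ), ⋃ (q : {q : ℚ // 0 < q}),
      (fun p : (Fin (m + 1) → X) × (ℕ → Bool) => p.2) ''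
        {p : (Fin (m + 1) → X) × (ℕ → Bool) |
          ∀ n, (∀ i, ‖p.1 i - ∑ k ∈ Finset.range n, f k (p.1 i) • e k‖ < (q : ℝ)) →
            p.2 n = true} := by
    rw [hA]; ext t
    simp only [Set.mem_image, Set.mem_iUnion, Set.mem_setOf_eq]
    constructor
    · rintro ⟨a, ⟨m, x, ε, hε, hsub⟩, rfl⟩
      obtain ⟨q, hq0, hqε⟩ := exists_rat_btwn hε
      refine ⟨m, ⟨q, by exact_mod_cast hq0⟩, (x, chi a), fun n hn => ?_, rfl⟩
      have hna : n ∈ a := by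
        apply hsub
        simp only [Set.mem_iInter, thetaSet, Set.mem_setOf_eq]
        exact fun i => lt_trans (hn i) hqε
      simp [chi, hna]
    · rintro ⟨m, q, ⟨x, t'⟩, h, rfl⟩
      refine ⟨{n | t' n = true}, ⟨m, x, (q : ℝ), by exact_mod_cast q.2, fun n hn => ?_⟩, ?_⟩
      · simp only [Set.mem_iInter, thetaSet, Set.mem_setOf_eq] at hn
        exact h n hn
      · funext n; simp [chi]
  rw [key]
  apply AnalyticSet.iUnion; intro m
  apply AnalyticSet.iUnion; intro q
  letI : MeasurableSpace ((Fin (m + 1) → X) × (ℕ → Bool)) := borel _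
  haveI : BorelSpace ((Fin (m + 1) → X) × (ℕ → Bool)) := ⟨rfl⟩
  have hB : MeasurableSet {p : (Fin (m + 1) → X) × (ℕ → Bool) |
      ∀ n, (∀ i, ‖p.1 i - ∑ k ∈ Finset.range n, f k (p.1 i) • e k‖ < (q : ℝ)) →
        p.2 n = true} := by
    have : {p : (Fin (m + 1) → X) × (ℕ → Bool) |
        ∀ n, (∀ i, ‖p.1 i - ∑ k ∈ Finset.range n, f k (p.1 i) • e k‖ < (q : ℝ)) →
          p.2 n = true} =
        ⋂ n, ({p : (Fin (m + 1) → X) × (ℕ → Bool) |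
            ∀ i, ‖p.1 i - ∑ k ∈ Finset.range n, f k (p.1 i) • e k‖ < (q : ℝ)}ᶜ ∪
          {p | p.2 n = true}) := by
      ext p
      simp only [Set.mem_iInter, Set.mem_union, Set.mem_compl_iff, Set.mem_setOf_eq]
      constructor
      · intro h n; by_cases hn : ∀ i, ‖p.1 i - ∑ k ∈ Finset.range n, f k (p.1 i) • e k‖ < (q : ℝ)
        · exact Or.inr (h n hn)
        · exact Or.inl hn
      · intro h n hn; rcases h n with h' | h'
        · exact absurd hn h'
        · exact h'
    rw [this]
    refine MeasurableSet.iInter fun n => MeasurableSet.union ?_ ?_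
    · refine (IsOpen.measurableSet ?_).compl
      have : IsOpen {p : (Fin (m + 1) → X) × (ℕ → Bool) |
          ∀ i, ‖p.1 i - ∑ k ∈ Finset.range n, f k (p.1 i) • e k‖ < (q : ℝ)} := by
        have : {p : (Fin (m + 1) → X) × (ℕ → Bool) |
            ∀ i, ‖p.1 i - ∑ k ∈ Finset.range n, f k (p.1 i) • e k‖ < (q : ℝ)} =
            ⋂ i, {p | ‖p.1 i - ∑ k ∈ Finset.range n, f k (p.1 i) • e k‖ < (q : ℝ)} := by
          ext p; simp
        rw [this]
        refine isOpen_iInter_of_finite fun i => ?_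
        have hc : Continuous fun p : (Fin (m + 1) → X) × (ℕ → Bool) =>
            ‖p.1 i - ∑ k ∈ Finset.range n, f k (p.1 i) • e k‖ := by
          fun_prop
        exact isOpen_lt hc continuous_const
      exact this
    · have hc : Continuous fun p : (Fin (m + 1) → X) × (ℕ → Bool) => p.2 n :=
        (continuous_apply n).comp continuous_snd
      exact hc.measurable (measurableSet_singleton true)
  haveI : PolishSpace Bool := inferInstance
  exact hB.analyticSet.image_of_continuous continuous_snd
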